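/- Let β be a totally real algebraic number with T(β) = 0 and T(β³) = 0, and set r = T((β² - T(β²))²). Then the difference between the largest and smallest conjugate of β is at least 2·√(2√r). -/

import Mathlib

/-- `x : ℝ` is a totally real algebraic number: it is algebraic over `ℚ` and all
complex roots of its minimal polynomial are real. -/
def IsTotallyReal (x : ℝ) : Prop :=
  IsAlgebraic ℚ x ∧ ∀ z : ℂ, Polynomial.aeval z (minpoly ℚ x) = 0 → z.im = 0

/-- The normalized trace of a real algebraic number: the sum of the real roots of its
minimal polynomial divided by its degree. -/
noncomputable def normTrace (x : ℝ) : ℝ :=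
  ((minpoly ℚ x).aroots ℝ).sum / (minpoly ℚ x).natDegree

open Polynomial IntermediateField Module

set_option maxHeartbeats 1000000
set_option synthInstance.maxHeartbeats 400000

section AuxSplits

private lemma splits_aux : ∀ (n : ℕ) (g : ℝ[X]), g.natDegree ≤ n →
    (∀ z : ℂ, Polynomial.aeval z g = 0 → z.im = 0) → g.Splits := by
  intro n
  induction n with
  | zero =>
    intro g hg _
    exact Splits.of_natDegree_le_one (le_trans hg (by norm_num))
  | succ n ih =>
    intro g hg H
    by_cases h1 : g.natDegree ≤ 1
    · exact Splits.of_natDegree_le_one h1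
    push_neg at h1
    have hg0 : g ≠ 0 := by
      intro h0
      rw [h0] at h1
      simp at h1
    have hdeg : 0 < (g.map (algebraMap ℝ ℂ)).degree := by
      rw [degree_map, degree_eq_natDegree hg0]
      exact_mod_cast Nat.lt_of_lt_of_le Nat.zero_lt_one (le_of_lt h1)
    obtain ⟨z, hz⟩ := Complex.exists_root hdeg
    have hz' : Polynomial.aeval z g = 0 := by
      rwa [aeval_def, ← eval_map]
    have him := H z hz'
    have hzx : ((z.re : ℝ) : ℂ) = z := Complex.ext rfl (by simp [him])
    have hroot : g.IsRoot z.re := by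
      have h2 : Polynomial.aeval ((algebraMap ℝ ℂ) z.re) g = algebraMap ℝ ℂ (g.eval z.re) := by
        rw [aeval_algebraMap_apply]
        simp
      rw [Complex.coe_algebraMap, hzx, hz'] at h2
      have h3 : ((g.eval z.re : ℝ) : ℂ) = ((0 : ℝ) : ℂ) := by simpa using h2.symm
      have h4 : g.eval z.re = 0 := by exact_mod_cast h3
      exact h4
    obtain ⟨g1, hfac⟩ := dvd_iff_isRoot.mpr hroot
    have hg1 : g1 ≠ 0 := by
      intro h0
      rw [h0, mul_zero] at hfac
      exact hg0 hfac
    have hdeg1 : g1.natDegree ≤ n := by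
      have := natDegree_mul (X_sub_C_ne_zero z.re) hg1
      rw [← hfac, natDegree_X_sub_C] at this
      omega
    have H1 : ∀ w : ℂ, Polynomial.aeval w g1 = 0 → w.im = 0 := by
      intro w hw
      apply H w
      rw [hfac, map_mul, hw, mul_zero]
    rw [hfac]
    exact (Splits.mul (Splits.X_sub_C _) (ih g1 hdeg1 H1))

private lemma splits_rat (f : ℚ[X]) (H : ∀ z : ℂ, Polynomial.aeval z f = 0 → z.im = 0) :
    (f.map (algebraMap ℚ ℝ)).Splits := by
  refine splits_aux _ _ le_rfl fun z hz => H z ?_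
  rwa [aeval_map_algebraMap] at hz

end AuxSplits

section AuxMain

variable {β : ℝ}

private lemma gen_inj (hβ : IsIntegral ℚ β) :
    Function.Injective (fun τ : ℚ⟮β⟯ →ₐ[ℚ] ℂ => τ (AdjoinSimple.gen ℚ β)) := by
  have hgen : ∀ τ : ℚ⟮β⟯ →ₐ[ℚ] ℂ, τ (AdjoinSimple.gen ℚ β) =
      ((algHomAdjoinIntegralEquiv ℚ (K := ℂ) hβ) τ : ℂ) := by
    intro τ
    conv_lhs => rw [← (algHomAdjoinIntegralEquiv ℚ (K := ℂ) hβ).symm_apply_apply τ]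
    exact algHomAdjoinIntegralEquiv_symm_apply_gen ℚ hβ _
  intro σ₁ σ₂ hs
  exact (algHomAdjoinIntegralEquiv ℚ (K := ℂ) hβ).injective
    (Subtype.ext (by rw [← hgen σ₁, ← hgen σ₂]; exact hs))

private lemma im_eq_zero (h : IsTotallyReal β) (σ : ℚ⟮β⟯ →ₐ[ℚ] ℂ) (x : ℚ⟮β⟯) :
    (σ x).im = 0 := by
  have hβ : IsIntegral ℚ β := h.1.isIntegral
  have hroot : Polynomial.aeval (σ (AdjoinSimple.gen ℚ β)) (minpoly ℚ β) = 0 := by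
    rw [Polynomial.aeval_algHom_apply, show aeval (AdjoinSimple.gen ℚ β) (minpoly ℚ β) = 0 from aeval_gen_minpoly ℚ β, map_zero]
  have hre : (σ (AdjoinSimple.gen ℚ β)).im = 0 := h.2 _ hroot
  set c : ℂ →ₐ[ℚ] ℂ := (Complex.conjAe.toAlgHom.restrictScalars ℚ) with hc
  have hconj : c.comp σ = σ := by
    apply gen_inj hβ
    show c (σ (AdjoinSimple.gen ℚ β)) = σ (AdjoinSimple.gen ℚ β)
    have : c (σ (AdjoinSimple.gen ℚ β)) = (starRingEnd ℂ) (σ (AdjoinSimple.gen ℚ β)) := rfl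
    rw [this]
    exact Complex.conj_eq_iff_im.mpr hre
  have h2 : (starRingEnd ℂ) (σ x) = σ x := by
    have := congrArg (fun f : ℚ⟮β⟯ →ₐ[ℚ] ℂ => f x) hconj
    exact this
  exact Complex.conj_eq_iff_im.mp h2

private lemma real_root (h : IsTotallyReal β) (x : ℚ⟮β⟯) :
    ∀ z : ℂ, Polynomial.aeval z (minpoly ℚ x) = 0 → z.im = 0 := by
  intro z hz
  haveI : FiniteDimensional ℚ ℚ⟮β⟯ := adjoin.finiteDimensional h.1.isIntegral
  have hK' : ∀ s : ℚ⟮β⟯, IsIntegral ℚ s ∧ ((minpoly ℚ s).map (algebraMap ℚ ℂ)).Splits := fun s =>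
    ⟨Algebra.IsIntegral.isIntegral s, IsAlgClosed.splits _⟩
  obtain ⟨σ, hσ⟩ := IntermediateField.exists_algHom_of_splits_of_aeval hK' hz
  rw [← hσ]
  exact im_eq_zero h σ x

private lemma normTrace_coe (h : IsTotallyReal β) (x : ℚ⟮β⟯) :
    normTrace (x : ℝ) = algebraMap ℚ ℝ (Algebra.trace ℚ ℚ⟮β⟯ x) / (finrank ℚ ℚ⟮β⟯ : ℝ) := by
  haveI : FiniteDimensional ℚ ℚ⟮β⟯ := adjoin.finiteDimensional h.1.isIntegral
  have hxi : IsIntegral ℚ x := Algebra.IsIntegral.isIntegral x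
  have hmp : minpoly ℚ (x : ℝ) = minpoly ℚ x := by
    have hcoe : (x : ℝ) = algebraMap ℚ⟮β⟯ ℝ x := rfl
    rw [hcoe, minpoly.algebraMap_eq (A := ℚ) (algebraMap ℚ⟮β⟯ ℝ).injective]
  have hsp : ((minpoly ℚ x).map (algebraMap ℚ ℝ)).Splits := splits_rat _ (real_root h x)
  have hdpos : 0 < (minpoly ℚ x).natDegree := minpoly.natDegree_pos hxi
  have hNpos : 0 < finrank ℚ ↥ℚ⟮β⟯ := finrank_pos
  have hEx : ∃ k : ℕ, (minpoly ℚ x).natDegree * k = finrank ℚ ↥ℚ⟮β⟯ ∧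
      algebraMap ℚ ℝ (Algebra.trace ℚ ℚ⟮β⟯ x) = k • ((minpoly ℚ x).aroots ℝ).sum := by
    refine ⟨_, ?_, trace_eq_sum_roots (K := ℚ) (L := ℚ⟮β⟯) (F := ℝ) (x := x) hsp⟩
    rw [← adjoin.finrank hxi]
    exact Module.finrank_mul_finrank ℚ _ _
  obtain ⟨k, hNk, htr⟩ := hEx
  have hkpos : 0 < k := by
    rcases Nat.eq_zero_or_pos k with h0 | h0
    · rw [h0, mul_zero] at hNk
      omega
    · exact h0
  have hN : (finrank ℚ ↥ℚ⟮β⟯ : ℝ) = ((minpoly ℚ x).natDegree : ℝ) * (k : ℝ) := by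
    rw [← hNk]
    push_cast
    ring
  rw [normTrace, hmp, htr, nsmul_eq_mul, hN]
  have h1 : ((minpoly ℚ x).natDegree : ℝ) ≠ 0 := by positivity
  have h2 : (k : ℝ) ≠ 0 := by positivity
  field_simp

private lemma trace_poly (h : IsTotallyReal β) (x : ℚ⟮β⟯) (Fr : ℝ → ℝ) (Fc : ℂ → ℂ)
    (hx : ∀ σ : ℚ⟮β⟯ →ₐ[ℚ] ℂ, σ x = Fc (σ (AdjoinSimple.gen ℚ β)))
    (hF : ∀ t : ℝ, Fc (t : ℂ) = ((Fr t : ℝ) : ℂ)) :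
    algebraMap ℚ ℝ (Algebra.trace ℚ ℚ⟮β⟯ x) = (((minpoly ℚ β).aroots ℝ).map Fr).sum := by
  haveI : FiniteDimensional ℚ ℚ⟮β⟯ := adjoin.finiteDimensional h.1.isIntegral
  have hβ : IsIntegral ℚ β := h.1.isIntegral
  have hne : minpoly ℚ β ≠ 0 := minpoly.ne_zero hβ
  have hsep : (minpoly ℚ β).Separable := (minpoly.irreducible hβ).separable
  have hms : (Finset.univ.val.map (fun σ : ℚ⟮β⟯ →ₐ[ℚ] ℂ => σ (AdjoinSimple.gen ℚ β))) =
      ((minpoly ℚ β).aroots ℝ).map (fun t : ℝ => (t : ℂ)) := by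
    have nd1 : ((Finset.univ.val.map
        (fun σ : ℚ⟮β⟯ →ₐ[ℚ] ℂ => σ (AdjoinSimple.gen ℚ β)))).Nodup :=
      Finset.univ.nodup.map (gen_inj hβ)
    have nd2 : (((minpoly ℚ β).aroots ℝ).map (fun t : ℝ => (t : ℂ))).Nodup := by
      refine Multiset.Nodup.map Complex.ofReal_injective ?_
      exact nodup_roots (Polynomial.Separable.map hsep)
    refine (Multiset.Nodup.ext nd1 nd2).mpr fun z => ?_
    simp only [Multiset.mem_map, Finset.mem_val, Finset.mem_univ, true_and]
    constructor
    · rintro ⟨σ, rfl⟩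
      have hroot : Polynomial.aeval (σ (AdjoinSimple.gen ℚ β)) (minpoly ℚ β) = 0 := by
        rw [Polynomial.aeval_algHom_apply, show aeval (AdjoinSimple.gen ℚ β) (minpoly ℚ β) = 0 from aeval_gen_minpoly ℚ β, map_zero]
      have him := h.2 _ hroot
      refine ⟨(σ (AdjoinSimple.gen ℚ β)).re, ?_, Complex.ext rfl (by simp [him])⟩
      rw [mem_aroots]
      refine ⟨hne, ?_⟩
      have hzx : (((σ (AdjoinSimple.gen ℚ β)).re : ℝ) : ℂ) = σ (AdjoinSimple.gen ℚ β) :=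
        Complex.ext rfl (by simp [him])
      have h2 : Polynomial.aeval ((algebraMap ℝ ℂ) (σ (AdjoinSimple.gen ℚ β)).re) (minpoly ℚ β)
          = algebraMap ℝ ℂ (Polynomial.aeval (σ (AdjoinSimple.gen ℚ β)).re (minpoly ℚ β)) :=
        aeval_algebraMap_apply ℂ _ _
      rw [Complex.coe_algebraMap, hzx, hroot] at h2
      have h3 : ((Polynomial.aeval (σ (AdjoinSimple.gen ℚ β)).re (minpoly ℚ β) : ℝ) : ℂ)
          = ((0 : ℝ) : ℂ) := by simpa using h2.symm
      exact_mod_cast h3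
    · rintro ⟨t, ht, rfl⟩
      have htz : ((t : ℂ)) ∈ (minpoly ℚ β).aroots ℂ := by
        rw [mem_aroots] at ht ⊢
        refine ⟨hne, ?_⟩
        have h2 : Polynomial.aeval ((algebraMap ℝ ℂ) t) (minpoly ℚ β)
            = algebraMap ℝ ℂ (Polynomial.aeval t (minpoly ℚ β)) := aeval_algebraMap_apply ℂ _ _
        rw [Complex.coe_algebraMap] at h2
        rw [h2, ht.2]
        simp
      exact ⟨(algHomAdjoinIntegralEquiv ℚ (K := ℂ) hβ).symm ⟨(t : ℂ), htz⟩,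
        algHomAdjoinIntegralEquiv_symm_apply_gen ℚ hβ _⟩
  have hsum_eq : ∀ (s : Multiset ℝ),
      ((s.map (fun t : ℝ => (t : ℂ))).map Fc).sum = (((s.map Fr).sum : ℝ) : ℂ) := by
    intro s
    induction s using Multiset.induction_on with
    | empty => simp
    | cons a s ih =>
      simp only [Multiset.map_cons, Multiset.sum_cons, ih, hF]
      push_cast
      ring
  apply Complex.ofReal_injective
  have h1 : ((algebraMap ℚ ℝ (Algebra.trace ℚ ℚ⟮β⟯ x) : ℝ) : ℂ)
      = algebraMap ℚ ℂ (Algebra.trace ℚ ℚ⟮β⟯ x) := by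
    rw [IsScalarTower.algebraMap_apply ℚ ℝ ℂ, Complex.coe_algebraMap]
  have hstep : (∑ σ : ℚ⟮β⟯ →ₐ[ℚ] ℂ, σ x) = (((((minpoly ℚ β).aroots ℝ).map Fr).sum : ℝ) : ℂ) :=
    calc (∑ σ : ℚ⟮β⟯ →ₐ[ℚ] ℂ, σ x)
        = ∑ σ : ℚ⟮β⟯ →ₐ[ℚ] ℂ, Fc (σ (AdjoinSimple.gen ℚ β)) :=
          Finset.sum_congr rfl (fun σ _ => hx σ)
      _ = ((Finset.univ.val.map
            (fun σ : ℚ⟮β⟯ →ₐ[ℚ] ℂ => σ (AdjoinSimple.gen ℚ β))).map Fc).sum := by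
          rw [Multiset.map_map]
          rfl
      _ = ((((minpoly ℚ β).aroots ℝ).map (fun t : ℝ => (t : ℂ))).map Fc).sum := by rw [hms]
      _ = (((((minpoly ℚ β).aroots ℝ).map Fr).sum : ℝ) : ℂ) := hsum_eq _
  exact h1.trans ((trace_eq_sum_embeddings (E := ℂ)).trans hstep)

end AuxMain

section AuxAnalytic

private lemma sum_expand (s : Multiset ℝ) (m c μ : ℝ) :
    (s.map (fun t => (t ^ 2 - c) ^ 2 + μ * t ^ 3)).sum
      = (s.map (fun t => (t ^ 2 - m) ^ 2)).sum + μ * (s.map (fun t => t ^ 3)).sum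
        + 2 * (m - c) * (s.map (fun t => t ^ 2)).sum + (s.card : ℝ) * (c ^ 2 - m ^ 2) := by
  induction s using Multiset.induction_on with
  | empty => simp
  | cons t s ih =>
    simp only [Multiset.map_cons, Multiset.sum_cons, Multiset.card_cons]
    push_cast
    rw [ih]
    ring

private lemma analytic (R : Multiset ℝ) (n : ℕ) (hnpos : 0 < n) (hcard : R.card = n)
    (h1 : R.sum = 0) (h3 : (R.map (fun t => t ^ 3)).sum = 0)
    (m r : ℝ) (hm : m = (R.map (fun t => t ^ 2)).sum / n)
    (hrdef : r = (R.map (fun t => (t ^ 2 - m) ^ 2)).sum / n) :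
    ∃ x ∈ R, ∃ y ∈ R, 2 * Real.sqrt (2 * Real.sqrt r) ≤ x - y := by
  have hn' : (n : ℝ) ≠ 0 := by positivity
  have hnpos' : (0 : ℝ) < n := by exact_mod_cast hnpos
  have hne : R ≠ 0 := by
    intro h0
    rw [h0] at hcard
    simp at hcard
    omega
  have hFne : R.toFinset.Nonempty := by
    obtain ⟨t, ht⟩ := Multiset.exists_mem_of_ne_zero hne
    exact ⟨t, Multiset.mem_toFinset.mpr ht⟩
  obtain ⟨b, hbdef⟩ : ∃ b : ℝ, b = R.toFinset.max' hFne := ⟨_, rfl⟩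
  obtain ⟨a, hadef⟩ : ∃ a : ℝ, a = R.toFinset.min' hFne := ⟨_, rfl⟩
  have hbR : b ∈ R := hbdef ▸ Multiset.mem_toFinset.mp (R.toFinset.max'_mem hFne)
  have haR : a ∈ R := hadef ▸ Multiset.mem_toFinset.mp (R.toFinset.min'_mem hFne)
  have hub : ∀ t ∈ R, t ≤ b := fun t ht =>
    hbdef ▸ Finset.le_max' _ _ (Multiset.mem_toFinset.mpr ht)
  have hlb : ∀ t ∈ R, a ≤ t := fun t ht =>
    hadef ▸ Finset.min'_le _ _ (Multiset.mem_toFinset.mpr ht)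
  have ha0 : a ≤ 0 := by
    have hle := Multiset.card_nsmul_le_sum hlb
    rw [h1, hcard, nsmul_eq_mul] at hle
    by_contra hc
    push_neg at hc
    have := mul_pos hnpos' hc
    linarith
  have hb0 : 0 ≤ b := by
    have hle := Multiset.sum_le_card_nsmul R b hub
    rw [h1, hcard, nsmul_eq_mul] at hle
    by_contra hc
    push_neg at hc
    have := mul_neg_of_pos_of_neg hnpos' hc
    linarith
  obtain ⟨p, hpdef⟩ : ∃ p : ℝ, p = -a := ⟨_, rfl⟩
  obtain ⟨q, hqdef⟩ : ∃ q : ℝ, q = b := ⟨_, rfl⟩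
  have hbRq : q ∈ R := hqdef ▸ hbR
  have hubq : ∀ t ∈ R, t ≤ q := fun t ht => hqdef ▸ hub t ht
  have hp0 : 0 ≤ p := by rw [hpdef]; linarith
  have hq0 : 0 ≤ q := by rw [hqdef]; exact hb0
  have hGle : ∀ x ∈ R.map (fun t => (t ^ 2 - p * q / 2) ^ 2 + (p - q) * t ^ 3),
      x ≤ p ^ 2 * q ^ 2 / 4 := by
    intro x hx
    obtain ⟨t, ht, rfl⟩ := Multiset.mem_map.mp hx
    have h1t : 0 ≤ t + p := by
      have := hlb t ht
      rw [hpdef]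
      linarith
    have h2t : 0 ≤ q - t := by
      have := hubq t ht
      linarith
    have key : (t ^ 2 - p * q / 2) ^ 2 + (p - q) * t ^ 3
        = p ^ 2 * q ^ 2 / 4 - t ^ 2 * (t + p) * (q - t) := by ring
    rw [key]
    nlinarith [mul_nonneg (mul_nonneg (sq_nonneg t) h1t) h2t]
  have hsum := Multiset.sum_le_card_nsmul _ _ hGle
  rw [Multiset.card_map, hcard, nsmul_eq_mul] at hsum
  have hexp := sum_expand R m (p * q / 2) (p - q)
  rw [h3, hcard] at hexp
  have hS2 : (R.map (fun t => t ^ 2)).sum = n * m := by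
    rw [hm]
    field_simp
  have hA : (R.map (fun t => (t ^ 2 - m) ^ 2)).sum = n * r := by
    rw [hrdef]
    field_simp
  rw [hexp, hS2, hA] at hsum
  have hrK : r ≤ p ^ 2 * q ^ 2 / 4 := by
    nlinarith [sq_nonneg (m - p * q / 2), hnpos', hsum]
  have hpq : (0 : ℝ) ≤ p * q := mul_nonneg hp0 hq0
  have s1 : Real.sqrt r ≤ p * q / 2 := by
    have : r ≤ (p * q / 2) ^ 2 := by nlinarith
    calc Real.sqrt r ≤ Real.sqrt ((p * q / 2) ^ 2) := Real.sqrt_le_sqrt this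
      _ = p * q / 2 := Real.sqrt_sq (by positivity)
  have s3 : Real.sqrt (2 * Real.sqrt r) ≤ (p + q) / 2 := by
    calc Real.sqrt (2 * Real.sqrt r) ≤ Real.sqrt (p * q) := Real.sqrt_le_sqrt (by linarith)
      _ ≤ Real.sqrt (((p + q) / 2) ^ 2) := Real.sqrt_le_sqrt (by nlinarith [sq_nonneg (p - q)])
      _ = (p + q) / 2 := Real.sqrt_sq (by positivity)
  refine ⟨b, hbR, a, haR, ?_⟩
  have hba : b - a = p + q := by rw [hpdef, hqdef]; ring
  linarith

end AuxAnalytic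

theorem stmt_11 (β : ℝ) (h : IsTotallyReal β) (hT : normTrace β = 0)
    (hT3 : normTrace (β ^ 3) = 0)
    (r : ℝ) (hr : r = normTrace ((β ^ 2 - normTrace (β ^ 2)) ^ 2)) :
    ∃ x y : ℝ, Polynomial.aeval x (minpoly ℚ β) = 0 ∧ Polynomial.aeval y (minpoly ℚ β) = 0 ∧
      2 * Real.sqrt (2 * Real.sqrt r) ≤ x - y := by
  have hβ : IsIntegral ℚ β := h.1.isIntegral
  haveI : FiniteDimensional ℚ ℚ⟮β⟯ := adjoin.finiteDimensional hβ
  have hgen : ((AdjoinSimple.gen ℚ β : ℚ⟮β⟯) : ℝ) = β := rfl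
  have hNn : finrank ℚ ↥ℚ⟮β⟯ = (minpoly ℚ β).natDegree := adjoin.finrank hβ
  have hnpos : 0 < (minpoly ℚ β).natDegree := minpoly.natDegree_pos hβ
  have hn' : ((minpoly ℚ β).natDegree : ℝ) ≠ 0 := by positivity
  have divzero : ∀ s : ℝ, s / ((minpoly ℚ β).natDegree : ℝ) = 0 → s = 0 := by
    intro s hs
    rcases div_eq_zero_iff.mp hs with h' | h'
    · exact h'
    · exact absurd h' hn'
  have hsp : ((minpoly ℚ β).map (algebraMap ℚ ℝ)).Splits := splits_rat _ h.2
  have hcard : ((minpoly ℚ β).aroots ℝ).card = (minpoly ℚ β).natDegree :=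
    ((natDegree_map _).symm.trans hsp.natDegree_eq_card_roots).symm
  have key : ∀ (x : ℚ⟮β⟯) (Fr : ℝ → ℝ) (Fc : ℂ → ℂ),
      (∀ σ : ℚ⟮β⟯ →ₐ[ℚ] ℂ, σ x = Fc (σ (AdjoinSimple.gen ℚ β))) →
      (∀ t : ℝ, Fc (t : ℂ) = ((Fr t : ℝ) : ℂ)) →
      normTrace (x : ℝ)
        = (((minpoly ℚ β).aroots ℝ).map Fr).sum / ((minpoly ℚ β).natDegree : ℝ) := by
    intro x Fr Fc h1 h2
    rw [normTrace_coe h x, trace_poly h x Fr Fc h1 h2, hNn]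
  -- sum of roots is zero
  have hS1 : ((minpoly ℚ β).aroots ℝ).sum = 0 := by
    apply divzero
    rw [← hT, normTrace]
  -- sum of cubes of roots is zero
  have hc3 : ((AdjoinSimple.gen ℚ β ^ 3 : ℚ⟮β⟯) : ℝ) = β ^ 3 := by
    rw [← hgen]
    norm_cast
  have hS3 : (((minpoly ℚ β).aroots ℝ).map (fun t => t ^ 3)).sum = 0 := by
    apply divzero
    have e := key (AdjoinSimple.gen ℚ β ^ 3) (fun t => t ^ 3) (fun z => z ^ 3)
      (fun σ => by rw [map_pow]) (fun t => by push_cast; ring)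
    rw [hc3, hT3] at e
    exact e.symm
  -- the mean of squares
  have hc2 : ((AdjoinSimple.gen ℚ β ^ 2 : ℚ⟮β⟯) : ℝ) = β ^ 2 := by
    rw [← hgen]
    norm_cast
  have hm : normTrace (β ^ 2)
      = (((minpoly ℚ β).aroots ℝ).map (fun t => t ^ 2)).sum / ((minpoly ℚ β).natDegree : ℝ) := by
    rw [← hc2]
    exact key _ (fun t => t ^ 2) (fun z => z ^ 2)
      (fun σ => by rw [map_pow]) (fun t => by push_cast; ring)
  have hmT : normTrace (β ^ 2)
      = algebraMap ℚ ℝ (Algebra.trace ℚ ℚ⟮β⟯ (AdjoinSimple.gen ℚ β ^ 2))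
          / (finrank ℚ ↥ℚ⟮β⟯ : ℝ) := by
    rw [← hc2]
    exact normTrace_coe h _
  -- the rational number equal to normTrace (β ^ 2)
  obtain ⟨T2, hT2⟩ : ∃ T2 : ℚ, T2 = Algebra.trace ℚ ℚ⟮β⟯ (AdjoinSimple.gen ℚ β ^ 2)
      / (finrank ℚ ↥ℚ⟮β⟯ : ℚ) := ⟨_, rfl⟩
  have hT2R : algebraMap ℚ ℝ T2 = normTrace (β ^ 2) := by
    rw [hT2, map_div₀, map_natCast, hmT]
  have hmL : ((algebraMap ℚ ℚ⟮β⟯ T2 : ℚ⟮β⟯) : ℝ) = normTrace (β ^ 2) := by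
    rw [← hT2R, IsScalarTower.algebraMap_apply ℚ ℚ⟮β⟯ ℝ]
    rfl
  have hσm : ∀ σ : ℚ⟮β⟯ →ₐ[ℚ] ℂ, σ (algebraMap ℚ ℚ⟮β⟯ T2)
      = ((normTrace (β ^ 2) : ℝ) : ℂ) := by
    intro σ
    rw [AlgHom.commutes, IsScalarTower.algebraMap_apply ℚ ℝ ℂ, Complex.coe_algebraMap, hT2R]
  have hc4 : (((AdjoinSimple.gen ℚ β ^ 2 - algebraMap ℚ ℚ⟮β⟯ T2) ^ 2 : ℚ⟮β⟯) : ℝ)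
      = (β ^ 2 - normTrace (β ^ 2)) ^ 2 := by
    push_cast [hgen, hmL]
    ring
  have hrfinal : r = (((minpoly ℚ β).aroots ℝ).map
      (fun t => (t ^ 2 - normTrace (β ^ 2)) ^ 2)).sum / ((minpoly ℚ β).natDegree : ℝ) := by
    rw [hr, ← hc4]
    refine key _ (fun t => (t ^ 2 - normTrace (β ^ 2)) ^ 2)
      (fun z => (z ^ 2 - ((normTrace (β ^ 2) : ℝ) : ℂ)) ^ 2) ?_ ?_
    · intro σ
      rw [map_pow, map_sub, map_pow, hσm]
    · intro t
      push_cast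
      ring
  obtain ⟨x, hx, y, hy, hineq⟩ := analytic ((minpoly ℚ β).aroots ℝ) (minpoly ℚ β).natDegree
    hnpos hcard hS1 hS3 (normTrace (β ^ 2)) r hm hrfinal
  exact ⟨x, y, (mem_aroots.mp hx).2, (mem_aroots.mp hy).2, hineq⟩
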